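/- Let R be a commutative ring, q ∈ R, A a commutative R-algebra, x ∈ A, and fix an integer p ≥ 1; set y := (1−q)x. Let B_{n,i} ∈ ℤ[t] be the divided p-Frobenius coefficients, i.e. the unique polynomials with (i)_t! · A_{n,i} = (n)_{t^p}! · (p)_t^n · B_{n,i}, where A_{n,i} := Σ_{j=0}^{n} (−1)^{n−j} t^{p(n−j)(n−j−1)/2} (n choose j)_{t^p} (pj choose i)_t. Then the A-linear map A⟨ω⟩_{q^p,(1−q)x^p} → A⟨ξ⟩_{q,y} sending ω^{[n]} ↦ Σ_{i=n}^{pn} B_{n,i}(q) x^{pn−i} ξ^{[i]} is a homomorphism of rings (the divided p-Frobenius map). -/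

import Mathlib

def qInt {R : Type*} [CommRing R] (q : R) (m : ℕ) : R := ∑ i ∈ Finset.range m, q ^ i

def qFact {R : Type*} [CommRing R] (q : R) : ℕ → R
  | 0 => 1
  | n + 1 => qFact q n * qInt q (n + 1)

def qChoose {R : Type*} [CommRing R] (q : R) : ℕ → ℕ → R
  | _, 0 => 1
  | 0, _ + 1 => 0
  | n + 1, k + 1 => qChoose q n k + q ^ (k + 1) * qChoose q n (k + 1)

def dpCoeff {A : Type*} [CommRing A] (q y : A) (m n i : ℕ) : A :=
  (-1 : A) ^ i * q ^ (i * (i - 1) / 2) * qChoose q (m + n - i) m * qChoose q m i * y ^ i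

/-- The `p`-Frobenius coefficients
`A_{n,i} := Σ_{j=0}^{n} (−1)^{n−j} t^{p(n−j)(n−j−1)/2} (n choose j)_{t^p} (pj choose i)_t`
in `ℤ[t]`. -/
noncomputable def frobCoeff (p n i : ℕ) : Polynomial ℤ :=
  ∑ j ∈ Finset.range (n + 1),
    (-1 : Polynomial ℤ) ^ (n - j) * Polynomial.X ^ (p * ((n - j) * (n - j - 1) / 2)) *
      qChoose ((Polynomial.X : Polynomial ℤ) ^ p) n j *
      qChoose (Polynomial.X : Polynomial ℤ) (p * j) i

section Basic
variable {R S : Type*} [CommRing R] [CommRing S] (q : R)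

@[simp] lemma qInt_zero : qInt q 0 = 0 := by simp [qInt]
@[simp] lemma qInt_one : qInt q 1 = 1 := by simp [qInt]
lemma qInt_succ (m : ℕ) : qInt q (m+1) = qInt q m + q ^ m := by simp [qInt, Finset.sum_range_succ]
lemma qInt_succ' (m : ℕ) : qInt q (m+1) = 1 + q * qInt q m := by
  simp [qInt, Finset.sum_range_succ', pow_succ, Finset.mul_sum, mul_comm, add_comm]

lemma qInt_add (a b : ℕ) : qInt q (a + b) = qInt q a + q ^ a * qInt q b := by
  induction b with
  | zero => simp
  | succ b ih =>
      rw [show a + (b+1) = (a+b)+1 by omega, qInt_succ, ih, qInt_succ, pow_add]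
      ring

lemma one_sub_mul_qInt (m : ℕ) : (1 - q) * qInt q m = 1 - q ^ m := by
  induction m with
  | zero => simp
  | succ m ih => rw [qInt_succ, mul_add, ih, pow_succ]; ring

@[simp] lemma qFact_zero : qFact q 0 = 1 := rfl
lemma qFact_succ (n : ℕ) : qFact q (n+1) = qFact q n * qInt q (n+1) := rfl

@[simp] lemma qChoose_zero_right (n : ℕ) : qChoose q n 0 = 1 := by cases n <;> rfl
@[simp] lemma qChoose_zero_succ (k : ℕ) : qChoose q 0 (k+1) = 0 := rfl
lemma qChoose_succ_succ (n k : ℕ) :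
    qChoose q (n+1) (k+1) = qChoose q n k + q ^ (k+1) * qChoose q n (k+1) := rfl

lemma qChoose_eq_zero_of_lt : ∀ {n k : ℕ}, n < k → qChoose q n k = 0
  | 0, _+1, _ => rfl
  | n+1, k+1, h => by
      rw [qChoose_succ_succ, qChoose_eq_zero_of_lt (by omega), qChoose_eq_zero_of_lt (by omega)]
      ring

@[simp] lemma qChoose_self : ∀ n : ℕ, qChoose q n n = 1
  | 0 => rfl
  | n+1 => by
      rw [qChoose_succ_succ, qChoose_self n, qChoose_eq_zero_of_lt q (Nat.lt_succ_self n)]; ring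

lemma qChoose_one_right : ∀ n : ℕ, qChoose q n 1 = qInt q n
  | 0 => by simp
  | n+1 => by rw [qChoose_succ_succ, qChoose_one_right n, qInt_succ', qChoose_zero_right, pow_one]

/-- the "other" Pascal rule. -/
lemma qChoose_succ_succ' : ∀ (m i : ℕ),
    qChoose q (m+1) (i+1) = qChoose q m (i+1) + q ^ (m - i) * qChoose q m i
  | 0, i => by
      cases i with
      | zero => simp [qChoose_succ_succ]
      | succ i => simp [qChoose_succ_succ, qChoose_eq_zero_of_lt]
  | m+1, 0 => by
      rw [qChoose_one_right, qChoose_one_right, qChoose_zero_right, Nat.sub_zero,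
        qInt_succ q (m+1)]
      ring
  | m+1, j+1 => by
      have key : q^(j+2) * (q^(m-(j+1)) * qChoose q m (j+1))
          = q^(m-j) * (q^(j+1) * qChoose q m (j+1)) := by
        rcases le_or_gt (j+1) m with h | h
        · rw [← mul_assoc, ← mul_assoc, ← pow_add, ← pow_add]
          congr 2
          omega
        · rw [qChoose_eq_zero_of_lt q h]; ring
      have h3 := qChoose_succ_succ' m j
      have h4 := qChoose_succ_succ' m (j+1)
      have hd1 : qChoose q (m+1) (j+1) = qChoose q m j + q^(j+1) * qChoose q m (j+1) := rfl
      have hd2 : qChoose q (m+1) (j+2) = qChoose q m (j+1) + q^(j+2) * qChoose q m (j+2) := rfl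
      have hd0 : qChoose q (m+1+1) (j+1+1)
          = qChoose q (m+1) (j+1) + q^(j+2) * qChoose q (m+1) (j+2) := rfl
      have e : m + 1 - (j + 1) = m - j := by omega
      rw [hd0, e]
      linear_combination h3 + q ^ (j + 2) * h4 - hd2 - q ^ (m - j) * hd1 + key

lemma map_qInt (f : R →+* S) (m : ℕ) : f (qInt q m) = qInt (f q) m := by
  simp [qInt]

lemma map_qFact (f : R →+* S) : ∀ m : ℕ, f (qFact q m) = qFact (f q) m
  | 0 => by simp
  | m+1 => by rw [qFact_succ, map_mul, map_qFact f m, map_qInt, qFact_succ]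

lemma map_qChoose (f : R →+* S) : ∀ n k : ℕ, f (qChoose q n k) = qChoose (f q) n k
  | _, 0 => by simp
  | 0, _+1 => by simp
  | n+1, k+1 => by
      rw [qChoose_succ_succ, map_add, map_mul, map_pow, map_qChoose f n k,
        map_qChoose f n (k+1), qChoose_succ_succ]

/-- factorial formula for q-binomials -/
lemma qChoose_mul_qFact : ∀ (m k : ℕ),
    qChoose q (m+k) m * (qFact q m * qFact q k) = qFact q (m+k)
  | 0, k => by simp
  | m+1, 0 => by simp
  | m+1, k+1 => by
      have e : m + 1 + (k + 1) = (m + (k+1)) + 1 := by omega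
      rw [e, qChoose_succ_succ]
      have e2 : m + (k+1) = (m+1) + k := by omega
      calc (qChoose q (m + (k + 1)) m + q ^ (m + 1) * qChoose q (m + (k + 1)) (m + 1)) *
            (qFact q (m + 1) * qFact q (k + 1))
          = (qChoose q (m + (k+1)) m * (qFact q m * qFact q (k+1))) * qInt q (m+1)
            + q ^ (m+1) * ((qChoose q ((m+1) + k) (m+1) * (qFact q (m+1) * qFact q k)) * qInt q (k+1)) := by
            rw [e2]; simp only [qFact_succ]; ring
        _ = qFact q (m + (k+1)) * (qInt q (m+1) + q^(m+1) * qInt q (k+1)) := by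
            rw [qChoose_mul_qFact m (k+1), e2, qChoose_mul_qFact (m+1) k]; ring
        _ = qFact q (m + (k + 1) + 1) := by
            rw [qFact_succ]
            congr 1
            rw [show m + (k+1) + 1 = (m+1) + (k+1) by omega, qInt_add q (m+1) (k+1)]

end Basic

lemma tri_succ (e : ℕ) : (e+1)*((e+1)-1)/2 = e*(e-1)/2 + e := by
  have h1 : (e+1)*((e+1)-1)/2 = (e+1).choose 2 := (Nat.choose_two_right (e+1)).symm
  have h2 : e*(e-1)/2 = e.choose 2 := (Nat.choose_two_right e).symm
  rw [h1, h2, Nat.choose_succ_succ e 1, Nat.choose_one_right, Nat.add_comm]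

lemma sum_range_shift {M : Type*} [AddCommMonoid M] (g : ℕ → M) (N : ℕ) :
    ∑ i ∈ Finset.range N, g (i+1) = ∑ i ∈ Finset.range (N+1), if i = 0 then 0 else g i := by
  rw [Finset.sum_range_succ' (fun i => if i = 0 then 0 else g i) N]
  simp

section Twp
variable {R S : Type*} [CommRing R] [CommRing S]

/-- twisted powers: `twp q s u n = ∏_{j<n} (u - q^j s)` -/
def twp (q s u : R) (n : ℕ) : R := ∏ j ∈ Finset.range n, (u - q ^ j * s)

@[simp] lemma twp_zero (q s u : R) : twp q s u 0 = 1 := by simp [twp]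

lemma twp_succ (q s u : R) (n : ℕ) : twp q s u (n+1) = twp q s u n * (u - q ^ n * s) := by
  simp [twp, Finset.prod_range_succ]

lemma map_twp (f : R →+* S) (q s u : R) (n : ℕ) :
    f (twp q s u n) = twp (f q) (f s) (f u) n := by
  simp [twp]

lemma twp_add (q s u : R) (a d : ℕ) :
    twp q s u (a + d) = twp q s u a * ∏ j ∈ Finset.range d, (u - q ^ (a + j) * s) := by
  simp [twp, Finset.prod_range_add, pow_add]

/-- twisted binomial theorem -/
lemma pow_eq_sum_twp (q s u : R) : ∀ m : ℕ,
    u ^ m = ∑ i ∈ Finset.range (m+1), qChoose q m i * s ^ (m - i) * twp q s u i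
  | 0 => by simp
  | m+1 => by
    have A : u ^ (m+1)
        = (∑ i ∈ Finset.range (m+1), qChoose q m i * s ^ (m-i) * twp q s u (i+1))
        + ∑ i ∈ Finset.range (m+1), q ^ i * qChoose q m i * s ^ (m+1-i) * twp q s u i := by
      rw [pow_succ, pow_eq_sum_twp q s u m, Finset.sum_mul, ← Finset.sum_add_distrib]
      refine Finset.sum_congr rfl fun i hi => ?_
      have hi' : i ≤ m := by simpa [Nat.lt_succ_iff] using hi
      have h1 : m + 1 - i = (m - i) + 1 := by omega
      rw [h1, twp_succ, pow_succ]
      ring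
    have e1 : (∑ i ∈ Finset.range (m+1), qChoose q m i * s ^ (m-i) * twp q s u (i+1))
        = ∑ j ∈ Finset.range (m+2),
            (if j = 0 then 0 else qChoose q m (j-1) * s ^ (m-(j-1)) * twp q s u j) := by
      rw [← sum_range_shift (fun j => qChoose q m (j-1) * s ^ (m-(j-1)) * twp q s u j) (m+1)]
      simp
    have e2 : (∑ i ∈ Finset.range (m+1), q ^ i * qChoose q m i * s ^ (m+1-i) * twp q s u i)
        = ∑ i ∈ Finset.range (m+2), q ^ i * qChoose q m i * s ^ (m+1-i) * twp q s u i := by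
      rw [Finset.sum_range_succ (fun i => q ^ i * qChoose q m i * s ^ (m+1-i) * twp q s u i) (m+1),
        qChoose_eq_zero_of_lt q (Nat.lt_succ_self m)]
      ring
    rw [A, e1, e2, ← Finset.sum_add_distrib]
    refine Finset.sum_congr rfl fun j hj => ?_
    match j with
    | 0 => simp
    | j+1 =>
      rw [if_neg (Nat.succ_ne_zero j)]
      simp only [Nat.add_sub_cancel]
      rw [qChoose_succ_succ, show m + 1 - (j+1) = m - j from by omega]
      ring

/-- Gauss binomial formula for twisted powers -/
lemma twp_eq_sum_pow (q s u : R) : ∀ n : ℕ,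
    twp q s u n = ∑ j ∈ Finset.range (n+1),
      (-1:R) ^ (n-j) * q ^ ((n-j)*((n-j)-1)/2) * qChoose q n j * s ^ (n-j) * u ^ j
  | 0 => by simp
  | n+1 => by
    have A : twp q s u (n+1)
        = (∑ j ∈ Finset.range (n+1),
            (-1:R) ^ (n-j) * q ^ ((n-j)*((n-j)-1)/2) * qChoose q n j * s ^ (n-j) * u ^ (j+1))
        + ∑ j ∈ Finset.range (n+1),
            (-1:R) * q ^ n * ((-1:R) ^ (n-j) * q ^ ((n-j)*((n-j)-1)/2) * qChoose q n j
              * s ^ (n+1-j) * u ^ j) := by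
      rw [twp_succ, twp_eq_sum_pow q s u n, Finset.sum_mul, ← Finset.sum_add_distrib]
      refine Finset.sum_congr rfl fun j hj => ?_
      have hj' : j ≤ n := by simpa [Nat.lt_succ_iff] using hj
      rw [show n + 1 - j = (n - j) + 1 from by omega, pow_succ, pow_succ]
      ring
    have e1 : (∑ j ∈ Finset.range (n+1),
            (-1:R) ^ (n-j) * q ^ ((n-j)*((n-j)-1)/2) * qChoose q n j * s ^ (n-j) * u ^ (j+1))
        = ∑ j ∈ Finset.range (n+2), (if j = 0 then 0 else
            (-1:R) ^ (n-(j-1)) * q ^ ((n-(j-1))*((n-(j-1))-1)/2) * qChoose q n (j-1)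
              * s ^ (n-(j-1)) * u ^ j) := by
      rw [← sum_range_shift (fun j => (-1:R) ^ (n-(j-1)) * q ^ ((n-(j-1))*((n-(j-1))-1)/2)
        * qChoose q n (j-1) * s ^ (n-(j-1)) * u ^ j) (n+1)]
      simp
    have e2 : (∑ j ∈ Finset.range (n+1),
            (-1:R) * q ^ n * ((-1:R) ^ (n-j) * q ^ ((n-j)*((n-j)-1)/2) * qChoose q n j
              * s ^ (n+1-j) * u ^ j))
        = ∑ j ∈ Finset.range (n+2),
            (-1:R) * q ^ n * ((-1:R) ^ (n-j) * q ^ ((n-j)*((n-j)-1)/2) * qChoose q n j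
              * s ^ (n+1-j) * u ^ j) := by
      rw [Finset.sum_range_succ (fun j => (-1:R) * q ^ n * ((-1:R) ^ (n-j)
        * q ^ ((n-j)*((n-j)-1)/2) * qChoose q n j * s ^ (n+1-j) * u ^ j)) (n+1),
        qChoose_eq_zero_of_lt q (Nat.lt_succ_self n)]
      ring
    rw [A, e1, e2, ← Finset.sum_add_distrib]
    refine Finset.sum_congr rfl fun j hj => ?_
    have hj' : j ≤ n + 1 := by simpa [Nat.lt_succ_iff] using hj
    match j, hj' with
    | 0, _ =>
      rw [if_pos rfl, zero_add]
      simp only [Nat.sub_zero]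
      rw [qChoose_zero_right, qChoose_zero_right, tri_succ n,
        pow_add q (n*(n-1)/2) n, pow_succ (-1:R) n]
      ring
    | j+1, hj' =>
      rw [if_neg (Nat.succ_ne_zero j)]
      simp only [Nat.add_sub_cancel]
      rw [qChoose_succ_succ, show n + 1 - (j+1) = n - j from by omega]
      rcases le_or_gt (j+1) n with h | h
      · obtain ⟨e, rfl⟩ : ∃ e, n = e + (j+1) := ⟨n-(j+1), by omega⟩
        rw [show e + (j+1) - j = e + 1 from by omega,
          show e + (j+1) - (j+1) = e from by omega, tri_succ e,
          show q ^ (e*(e-1)/2 + e) = q ^ (e*(e-1)/2) * q ^ e from pow_add q _ e,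
          show (-1:R) ^ (e+1) = (-1:R)^e * (-1:R) from pow_succ (-1:R) e,
          show q ^ (e + (j+1)) = q ^ e * q ^ (j+1) from pow_add q e (j+1)]
        ring
      · have h0 : qChoose q n (j+1) = 0 := qChoose_eq_zero_of_lt q h
        have hj0 : j = n := by omega
        subst hj0
        simp [h0]
end Twp

section TwpMul
variable {R : Type*} [CommRing R]

/-- coefficient in the twisted-power product formula -/
def cterm (q s : R) (n m i : ℕ) : R :=
  (-1:R)^i * q^(i*(i-1)/2) * qChoose q m i * (∏ j ∈ Finset.range i, (1 - q^(n-j))) * s^i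

lemma twp_mul (q s u : R) (n : ℕ) : ∀ m : ℕ,
    twp q s u m * twp q s u n
      = ∑ i ∈ Finset.range (n+1), cterm q s n m i * twp q s u (m+n-i)
  | 0 => by
    rw [twp_zero, one_mul, Finset.sum_eq_single 0]
    · simp [cterm]
    · intro b _ hb
      obtain ⟨i, rfl⟩ := Nat.exists_eq_succ_of_ne_zero hb
      simp [cterm, qChoose_zero_succ]
    · intro h
      exact absurd (Finset.mem_range.2 (Nat.succ_pos n)) h
  | m+1 => by
    have A : twp q s u (m+1) * twp q s u n
        = (∑ i ∈ Finset.range (n+1), cterm q s n m i * twp q s u ((m+1)+n-i))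
        + ∑ i ∈ Finset.range (n+1),
            cterm q s n m i * (q^m * (q^(n-i) - 1) * s) * twp q s u (m+n-i) := by
      rw [twp_succ, mul_right_comm, twp_mul q s u n m, Finset.sum_mul, ← Finset.sum_add_distrib]
      refine Finset.sum_congr rfl fun i hi => ?_
      have hi' : i ≤ n := by simpa [Nat.lt_succ_iff] using hi
      have harg : (m+1)+n-i = (m+n-i)+1 := by omega
      have hq : q^(m+n-i) = q^m * q^(n-i) := by rw [← pow_add]; congr 1; omega
      rw [harg, twp_succ, hq]
      ring
    have e2 : (∑ i ∈ Finset.range (n+1),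
            cterm q s n m i * (q^m * (q^(n-i) - 1) * s) * twp q s u (m+n-i))
        = ∑ i ∈ Finset.range (n+1), if i = 0 then 0 else
            cterm q s n m (i-1) * (q^m * (q^(n-(i-1)) - 1) * s) * twp q s u ((m+1)+n-i) := by
      rw [Finset.sum_range_succ, Nat.sub_self, pow_zero]
      simp only [sub_self, mul_zero, zero_mul, add_zero]
      rw [← sum_range_shift (fun j => cterm q s n m (j-1) * (q^m * (q^(n-(j-1)) - 1) * s)
        * twp q s u ((m+1)+n-j)) n]
      refine Finset.sum_congr rfl fun i hi => ?_
      simp only [Nat.add_sub_cancel]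
      rw [show (m+1)+n-(i+1) = m+n-i from by omega]
    rw [A, e2, ← Finset.sum_add_distrib]
    refine Finset.sum_congr rfl fun i hi => ?_
    match i with
    | 0 => simp [cterm]
    | j+1 =>
      rw [if_neg (Nat.succ_ne_zero j)]
      simp only [Nat.add_sub_cancel]
      rcases le_or_gt j m with h | h
      · obtain ⟨e, rfl⟩ : ∃ e, m = e + j := ⟨m-j, by omega⟩
        simp only [cterm]
        rw [qChoose_succ_succ' q (e+j) j, show e + j - j = e from by omega, tri_succ j,
          Finset.prod_range_succ, pow_add q (j*(j-1)/2) j, pow_succ (-1:R) j,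
          show q ^ (e+j) = q^e * q^j from pow_add q e j, pow_succ s j]
        ring
      · simp only [cterm]
        rw [qChoose_eq_zero_of_lt q (show m < j+1 from by omega),
          qChoose_eq_zero_of_lt q (show m < j from h),
          qChoose_eq_zero_of_lt q (show m+1 < j+1 from by omega)]
        ring

end TwpMul

section Fact
variable {R : Type*} [CommRing R] (q s : R)

lemma g_fact : ∀ i : ℕ, i ≤ (n:ℕ) →
    (∏ j ∈ Finset.range i, (1 - q^(n-j))) * qFact q (n-i) = (1-q)^i * qFact q n
  | 0, _ => by simp
  | i+1, h => by
    rw [Finset.prod_range_succ, show n - i = (n-(i+1)) + 1 from by omega] 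
    rw [← one_sub_mul_qInt q ((n-(i+1))+1)]
    calc (∏ j ∈ Finset.range i, (1 - q ^ (n - j))) * ((1-q) * qInt q ((n-(i+1))+1)) * qFact q (n-(i+1))
        = (1-q) * ((∏ j ∈ Finset.range i, (1 - q ^ (n - j))) * (qFact q (n-(i+1)) * qInt q ((n-(i+1))+1))) := by
          ring
      _ = (1-q) * ((∏ j ∈ Finset.range i, (1 - q ^ (n - j))) * qFact q (n-i)) := by
          rw [← qFact_succ, show (n-(i+1))+1 = n - i from by omega]
      _ = (1-q) * ((1-q)^i * qFact q n) := by rw [g_fact i (by omega)]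
      _ = (1-q)^(i+1) * qFact q n := by ring

lemma cterm_fact (m n i : ℕ) (him : i ≤ m) (hin : i ≤ n) :
    cterm q s n m i * qFact q (m+n-i) = dpCoeff q ((1-q)*s) m n i * (qFact q m * qFact q n) := by
  have hF := qChoose_mul_qFact q m (n-i)
  rw [show m + (n-i) = m+n-i from by omega] at hF
  have hg := g_fact q (n := n) i hin
  have key : (∏ j ∈ Finset.range i, (1 - q^(n-j))) * qFact q (m+n-i)
      = qChoose q (m+n-i) m * qFact q m * ((1-q)^i * qFact q n) := by
    calc (∏ j ∈ Finset.range i, (1 - q^(n-j))) * qFact q (m+n-i)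
        = (∏ j ∈ Finset.range i, (1 - q^(n-j))) * (qChoose q (m+n-i) m * (qFact q m * qFact q (n-i))) := by
          rw [hF]
      _ = qChoose q (m+n-i) m * qFact q m * ((∏ j ∈ Finset.range i, (1 - q^(n-j))) * qFact q (n-i)) := by
          ring
      _ = qChoose q (m+n-i) m * qFact q m * ((1-q)^i * qFact q n) := by rw [hg]
  simp only [cterm, dpCoeff, mul_pow]
  calc (-1:R)^i * q^(i*(i-1)/2) * qChoose q m i * (∏ j ∈ Finset.range i, (1 - q^(n-j))) * s^i
        * qFact q (m+n-i)
      = ((-1:R)^i * q^(i*(i-1)/2) * qChoose q m i * s^i) *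
          ((∏ j ∈ Finset.range i, (1 - q^(n-j))) * qFact q (m+n-i)) := by ring
    _ = ((-1:R)^i * q^(i*(i-1)/2) * qChoose q m i * s^i) *
          (qChoose q (m+n-i) m * qFact q m * ((1-q)^i * qFact q n)) := by rw [key]
    _ = (-1:R)^i * q^(i*(i-1)/2) * qChoose q (m+n-i) m * qChoose q m i * ((1-q)^i * s^i) *
          (qFact q m * qFact q n) := by ring

end Fact

section Monic
open Polynomial
variable {K : Type*} [CommRing K]

lemma sum_monic_eq_zero (T : ℕ → Polynomial K) (hT : ∀ k, (T k).Monic)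
    (hdeg : ∀ k, (T k).natDegree = k) :
    ∀ N (a : ℕ → K), (∑ k ∈ Finset.range N, Polynomial.C (a k) * T k) = 0 → ∀ k < N, a k = 0 := by
  intro N
  induction N with
  | zero => intro a _ k hk; omega
  | succ N ih =>
    intro a h k hk
    have hN : a N = 0 := by
      have hc := congrArg (fun f => Polynomial.coeff f N) h
      simp only [Polynomial.finset_sum_coeff, Polynomial.coeff_zero] at hc
      rw [Finset.sum_range_succ] at hc
      have hz : ∀ j ∈ Finset.range N, ((Polynomial.C (a j)) * T j).coeff N = 0 := by
        intro j hj
        have : ((Polynomial.C (a j)) * T j).natDegree < N := by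
          have h1 := Polynomial.natDegree_C_mul_le (a j) (T j)
          have h2 := Finset.mem_range.1 hj
          have h3 := hdeg j
          omega
        exact Polynomial.coeff_eq_zero_of_natDegree_lt this
      rw [Finset.sum_eq_zero hz, zero_add, Polynomial.coeff_C_mul] at hc
      have hcn : (T N).coeff N = 1 := by
        have := (hT N).coeff_natDegree
        rwa [hdeg N] at this
      rw [hcn] at hc
      simpa using hc
    rcases Nat.lt_succ_iff_lt_or_eq.1 hk with hk' | rfl
    · apply ih a _ k hk'
      rw [Finset.sum_range_succ, hN] at h
      simpa using h
    · exact hN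

lemma twp_basis_monic [Nontrivial K] (q x : K) (k : ℕ) :
    (twp (Polynomial.C q) (Polynomial.C x) (Polynomial.X + Polynomial.C x) k).Monic ∧
    (twp (Polynomial.C q) (Polynomial.C x) (Polynomial.X + Polynomial.C x) k).natDegree = k := by
  have hfac : ∀ j : ℕ, (Polynomial.X + Polynomial.C x) - (Polynomial.C q)^j * Polynomial.C x
      = Polynomial.X + Polynomial.C (x - q^j * x) := by
    intro j
    rw [← Polynomial.C_pow, ← Polynomial.C_mul, add_sub_assoc, ← Polynomial.C_sub]
  have hM : ∀ j : ℕ, ((Polynomial.X + Polynomial.C x) - (Polynomial.C q)^j * Polynomial.C x).Monic := by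
    intro j; rw [hfac j]; exact Polynomial.monic_X_add_C _
  constructor
  · exact Polynomial.monic_prod_of_monic _ _ (fun j _ => hM j)
  · rw [twp, Polynomial.natDegree_prod_of_monic _ _ (fun j _ => hM j)]
    rw [Finset.sum_congr rfl (fun j _ => by rw [hfac j, Polynomial.natDegree_X_add_C])]
    simp

end Monic

section Univ
open Polynomial

/-- the universal base ring `ℤ[t][X]` -/
abbrev UR := Polynomial (Polynomial ℤ)

noncomputable def tA : UR := Polynomial.C Polynomial.X

/-- evaluation `ℤ[t][X] → A`, `t ↦ Q`, `X ↦ x` -/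
noncomputable def psiA {A : Type*} [CommRing A] (Q x : A) : UR →+* A :=
  Polynomial.eval₂RingHom (Polynomial.eval₂RingHom (Int.castRingHom A) Q) x

variable {A : Type*} [CommRing A] (Q x : A)

@[simp] lemma psiA_X : psiA Q x Polynomial.X = x := Polynomial.eval₂_X _ _

@[simp] lemma psiA_C (f : Polynomial ℤ) :
    psiA Q x (Polynomial.C f) = Polynomial.eval₂ (Int.castRingHom A) Q f := by
  simp [psiA]

lemma eval₂_qChoose {S : Type*} [CommRing S] (q : S) (r : Polynomial ℤ) (n k : ℕ) :
    Polynomial.eval₂ (Int.castRingHom S) q (qChoose r n k)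
    = qChoose (Polynomial.eval₂ (Int.castRingHom S) q r) n k := by
  have := map_qChoose r (Polynomial.eval₂RingHom (Int.castRingHom S) q) n k
  simpa [Polynomial.coe_eval₂RingHom] using this

@[simp] lemma psiA_tA : psiA Q x tA = Q := by
  have h1 : psiA Q x (Polynomial.C Polynomial.X) = Polynomial.eval₂ (Int.castRingHom A) Q Polynomial.X := by
    simp [psiA]
  rw [tA, h1, Polynomial.eval₂_X]

lemma map_dpCoeff {R S : Type*} [CommRing R] [CommRing S] (f : R →+* S) (q y : R) (m n i : ℕ) :
    f (dpCoeff q y m n i) = dpCoeff (f q) (f y) m n i := by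
  simp [dpCoeff, map_qChoose]

lemma map_cterm {R S : Type*} [CommRing R] [CommRing S] (f : R →+* S) (q s : R) (n m i : ℕ) :
    f (cterm q s n m i) = cterm (f q) (f s) n m i := by
  simp [cterm, map_qChoose]

variable (p : ℕ) (Bc : ℕ → ℕ → Polynomial ℤ)

/-- universal coefficient of `ξ^{[k]}` in the image of `ω^{[n]}` -/
noncomputable def ucf (n k : ℕ) : UR :=
  if n ≤ k ∧ k ≤ p*n then (Polynomial.C (Bc n k)) * Polynomial.X^(p*n-k) else 0

/-- universal coefficient of `ξ^{[k]}` in the image of `ω^{[m]}ω^{[n]}` computed via `C` -/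
noncomputable def uLHS (m n k : ℕ) : UR :=
  ∑ i ∈ Finset.range (min m n + 1),
    dpCoeff (tA^p) ((1 - tA) * Polynomial.X^p) m n i * ucf p Bc (m+n-i) k

/-- universal coefficient of `ξ^{[k]}` in the image of `ω^{[m]}ω^{[n]}` computed via `B` -/
noncomputable def uRHS (m n k : ℕ) : UR :=
  ∑ i ∈ Finset.Icc m (p*m), ∑ j ∈ Finset.Icc n (p*n), ∑ r ∈ Finset.range (min i j + 1),
    if i+j-r = k then ucf p Bc m i * ucf p Bc n j * dpCoeff tA ((1-tA) * Polynomial.X) i j r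
    else 0

variable {B : Type*} [CommRing B] [Algebra A B]

lemma ucf_smul_extend (b : ℕ → B) (N a : ℕ) (haN : p * a ≤ N) :
    (∑ k ∈ Finset.Icc a (p*a), psiA Q x (ucf p Bc a k) • b k)
      = ∑ k ∈ Finset.range (N+1), psiA Q x (ucf p Bc a k) • b k := by
  apply Finset.sum_subset
  · intro k hk
    rw [Finset.mem_Icc] at hk
    rw [Finset.mem_range]
    omega
  · intro k _ hnk
    rw [Finset.mem_Icc] at hnk
    rw [ucf, if_neg (by omega), map_zero, zero_smul]

lemma G1 (b : ℕ → B) (φc : ℕ → B)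
    (hφ : ∀ a, φc a = ∑ k ∈ Finset.Icc a (p*a), psiA Q x (ucf p Bc a k) • b k) (m n : ℕ) :
    ∑ i ∈ Finset.range (min m n + 1), dpCoeff (Q^p) ((1-Q)*x^p) m n i • φc (m+n-i)
    = ∑ k ∈ Finset.range (p*(m+n)+1), psiA Q x (uLHS p Bc m n k) • b k := by
  have step : ∀ i ∈ Finset.range (min m n + 1),
      dpCoeff (Q^p) ((1-Q)*x^p) m n i • φc (m+n-i)
      = ∑ k ∈ Finset.range (p*(m+n)+1),
          (psiA Q x (dpCoeff (tA^p) ((1 - tA) * Polynomial.X^p) m n i * ucf p Bc (m+n-i) k)) • b k := by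
    intro i hi
    rw [hφ (m+n-i), ucf_smul_extend Q x p Bc b (p*(m+n)) (m+n-i)
      (Nat.mul_le_mul_left p (by omega)), Finset.smul_sum]
    refine Finset.sum_congr rfl fun k _ => ?_
    rw [map_mul, map_dpCoeff, smul_smul]
    simp only [map_pow, map_mul, map_sub, map_one, psiA_tA, psiA_X]
  rw [Finset.sum_congr rfl step, Finset.sum_comm]
  refine Finset.sum_congr rfl fun k _ => ?_
  rw [uLHS, map_sum, Finset.sum_smul]

lemma G2 (b : ℕ → B)
    (hb : ∀ m n : ℕ, b m * b n = ∑ i ∈ Finset.range (min m n + 1),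
      dpCoeff Q ((1 - Q) * x) m n i • b (m + n - i)) (m n : ℕ) :
    (∑ i ∈ Finset.Icc m (p*m), psiA Q x (ucf p Bc m i) • b i) *
      (∑ j ∈ Finset.Icc n (p*n), psiA Q x (ucf p Bc n j) • b j)
    = ∑ k ∈ Finset.range (p*(m+n)+1), psiA Q x (uRHS p Bc m n k) • b k := by
  rw [Finset.sum_mul_sum]
  have step : ∀ i ∈ Finset.Icc m (p*m), ∀ j ∈ Finset.Icc n (p*n),
      (psiA Q x (ucf p Bc m i) • b i) * (psiA Q x (ucf p Bc n j) • b j)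
      = ∑ k ∈ Finset.range (p*(m+n)+1), ∑ r ∈ Finset.range (min i j + 1),
          psiA Q x (if i+j-r = k then
            ucf p Bc m i * ucf p Bc n j * dpCoeff tA ((1-tA) * Polynomial.X) i j r else 0) • b k := by
    intro i hi j hj
    rw [Finset.mem_Icc] at hi hj
    rw [smul_mul_smul_comm, hb i j, Finset.smul_sum, Finset.sum_comm]
    refine Finset.sum_congr rfl fun r hr => ?_
    rw [Finset.mem_range] at hr
    have harg : i + j - r < p*(m+n)+1 := by
      have h1 : p*m + p*n = p*(m+n) := by ring
      omega
    rw [Finset.sum_eq_single (i+j-r)]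
    · rw [if_pos rfl, map_mul, map_mul, map_dpCoeff, smul_smul]
      simp only [map_mul, map_sub, map_one, psiA_tA, psiA_X]
    · intro k _ hk
      rw [if_neg (fun hh => hk hh.symm), map_zero, zero_smul]
    · intro hnot
      exact absurd (Finset.mem_range.2 harg) hnot
  calc ∑ i ∈ Finset.Icc m (p*m), ∑ j ∈ Finset.Icc n (p*n),
        (psiA Q x (ucf p Bc m i) • b i) * (psiA Q x (ucf p Bc n j) • b j)
      = ∑ i ∈ Finset.Icc m (p*m), ∑ j ∈ Finset.Icc n (p*n),
          ∑ k ∈ Finset.range (p*(m+n)+1), ∑ r ∈ Finset.range (min i j + 1),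
          psiA Q x (if i+j-r = k then
            ucf p Bc m i * ucf p Bc n j * dpCoeff tA ((1-tA) * Polynomial.X) i j r else 0) • b k :=
        Finset.sum_congr rfl fun i hi => Finset.sum_congr rfl fun j hj => step i hi j hj
    _ = ∑ i ∈ Finset.Icc m (p*m), ∑ k ∈ Finset.range (p*(m+n)+1), ∑ j ∈ Finset.Icc n (p*n),
          ∑ r ∈ Finset.range (min i j + 1),
          psiA Q x (if i+j-r = k then
            ucf p Bc m i * ucf p Bc n j * dpCoeff tA ((1-tA) * Polynomial.X) i j r else 0) • b k :=
        Finset.sum_congr rfl fun i _ => Finset.sum_comm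
    _ = ∑ k ∈ Finset.range (p*(m+n)+1), ∑ i ∈ Finset.Icc m (p*m), ∑ j ∈ Finset.Icc n (p*n),
          ∑ r ∈ Finset.range (min i j + 1),
          psiA Q x (if i+j-r = k then
            ucf p Bc m i * ucf p Bc n j * dpCoeff tA ((1-tA) * Polynomial.X) i j r else 0) • b k :=
        Finset.sum_comm
    _ = ∑ k ∈ Finset.range (p*(m+n)+1), psiA Q x (uRHS p Bc m n k) • b k := by
        refine Finset.sum_congr rfl fun k _ => ?_
        rw [uRHS, map_sum, Finset.sum_smul]
        refine Finset.sum_congr rfl fun i _ => ?_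
        rw [map_sum, Finset.sum_smul]
        refine Finset.sum_congr rfl fun j _ => ?_
        rw [map_sum, Finset.sum_smul]

end Univ

section Model
open Polynomial
variable {K : Type*} [Field K]

/-- the model divided-power basis `ξ^{[k]} = ξ^{(k)}/(k)_q!` inside `K[ξ]` -/
noncomputable def bB (q x : K) (k : ℕ) : Polynomial K :=
  Polynomial.C ((qFact q k)⁻¹) *
    twp (Polynomial.C q) (Polynomial.C x) (Polynomial.X + Polynomial.C x) k

lemma bB_mul (q x : K) (hfact : ∀ k, qFact q k ≠ 0) (m n : ℕ) :
    bB q x m * bB q x n = ∑ i ∈ Finset.range (min m n + 1),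
      dpCoeff q ((1-q)*x) m n i • bB q x (m+n-i) := by
  have key : ∀ i ≤ n, (qFact q m)⁻¹ * (qFact q n)⁻¹ * cterm q x n m i
      = dpCoeff q ((1-q)*x) m n i * (qFact q (m+n-i))⁻¹ := by
    intro i hin
    rcases le_or_gt i m with him | him
    · have hcf := cterm_fact q x m n i him hin
      have h1 : qFact q m ≠ 0 := hfact m
      have h2 : qFact q n ≠ 0 := hfact n
      have h3 : qFact q (m+n-i) ≠ 0 := hfact (m+n-i)
      field_simp
      linear_combination hcf
    · rw [cterm, dpCoeff, qChoose_eq_zero_of_lt q him]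
      ring
  have main : bB q x m * bB q x n = ∑ i ∈ Finset.range (n + 1),
      dpCoeff q ((1-q)*x) m n i • bB q x (m+n-i) := by
    calc bB q x m * bB q x n
        = Polynomial.C ((qFact q m)⁻¹ * (qFact q n)⁻¹) *
            (twp (Polynomial.C q) (Polynomial.C x) (Polynomial.X + Polynomial.C x) m *
             twp (Polynomial.C q) (Polynomial.C x) (Polynomial.X + Polynomial.C x) n) := by
          rw [bB, bB, Polynomial.C_mul]; ring
      _ = ∑ i ∈ Finset.range (n+1),
            Polynomial.C ((qFact q m)⁻¹ * (qFact q n)⁻¹ * cterm q x n m i) *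
              twp (Polynomial.C q) (Polynomial.C x) (Polynomial.X + Polynomial.C x) (m+n-i) := by
          rw [twp_mul, Finset.mul_sum]
          refine Finset.sum_congr rfl fun i _ => ?_
          rw [← map_cterm (Polynomial.C : K →+* Polynomial K) q x n m i, ← mul_assoc,
            ← Polynomial.C_mul]
      _ = ∑ i ∈ Finset.range (n+1), dpCoeff q ((1-q)*x) m n i • bB q x (m+n-i) := by
          refine Finset.sum_congr rfl fun i hi => ?_
          rw [key i (by simpa [Nat.lt_succ_iff] using hi), bB, Polynomial.smul_eq_C_mul,
            Polynomial.C_mul]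
          ring
  rw [main]
  refine (Finset.sum_subset ?_ ?_).symm
  · intro i hi
    rw [Finset.mem_range] at hi ⊢
    omega
  · intro i hi hni
    rw [Finset.mem_range] at hi hni
    have him : m < i := by omega
    rw [dpCoeff, qChoose_eq_zero_of_lt q him]
    simp

/-- the Frobenius substitution `ω ↦ ((ξ+x)^p − x^p)/(p)_q` -/
noncomputable def wFrob (q x : K) (p : ℕ) : Polynomial K :=
  Polynomial.C ((qInt q p)⁻¹) * ((Polynomial.X + Polynomial.C x)^p - Polynomial.C (x^p))

noncomputable def s0 (q x : K) (p : ℕ) : K := x^p * (qInt q p)⁻¹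

/-- Gauss + twisted binomial: expansion of `∏_{j<a}((ξ+x)^p − q^{pj}x^p)` -/
lemma gauss_tb {S : Type*} [CommRing S] (q x : S) (p a : ℕ) :
    twp (Polynomial.C (q^p)) (Polynomial.C (x^p))
        ((Polynomial.X + Polynomial.C x)^p) a
    = ∑ i ∈ Finset.range (p*a+1),
        Polynomial.C (Polynomial.eval₂ (Int.castRingHom S) q (frobCoeff p a i) * x^(p*a-i)) *
          twp (Polynomial.C q) (Polynomial.C x) (Polynomial.X + Polynomial.C x) i := by
  have hTB : ∀ j ≤ a, ((Polynomial.X + Polynomial.C x)^p)^j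
      = ∑ i ∈ Finset.range (p*a+1),
          Polynomial.C (qChoose q (p*j) i * x^(p*j-i)) *
            twp (Polynomial.C q) (Polynomial.C x) (Polynomial.X + Polynomial.C x) i := by
    intro j hj
    rw [← pow_mul, pow_eq_sum_twp (Polynomial.C q) (Polynomial.C x) _ (p*j)]
    have hsub : Finset.range (p*j+1) ⊆ Finset.range (p*a+1) := by
      intro i hi
      rw [Finset.mem_range] at hi ⊢
      have := Nat.mul_le_mul_left p hj
      omega
    rw [Finset.sum_subset hsub ?hz]
    · refine Finset.sum_congr rfl fun i _ => ?_
      rw [← map_qChoose q (Polynomial.C : S →+* Polynomial S) (p*j) i, ← Polynomial.C_pow,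
        ← Polynomial.C_mul]
    case hz =>
      intro i _ hni
      rw [Finset.mem_range] at hni
      rw [qChoose_eq_zero_of_lt (Polynomial.C q) (show p*j < i from by omega)]
      simp
  rw [twp_eq_sum_pow (Polynomial.C (q^p)) (Polynomial.C (x^p)) _ a]
  calc ∑ j ∈ Finset.range (a+1),
        (-1:Polynomial S)^(a-j) * (Polynomial.C (q^p))^((a-j)*((a-j)-1)/2) *
          qChoose (Polynomial.C (q^p)) a j * (Polynomial.C (x^p))^(a-j) *
          ((Polynomial.X + Polynomial.C x)^p)^j
      = ∑ j ∈ Finset.range (a+1), ∑ i ∈ Finset.range (p*a+1),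
          Polynomial.C ((-1:S)^(a-j) * (q^p)^((a-j)*((a-j)-1)/2) * qChoose (q^p) a j *
            (x^p)^(a-j) * (qChoose q (p*j) i * x^(p*j-i))) *
            twp (Polynomial.C q) (Polynomial.C x) (Polynomial.X + Polynomial.C x) i := by
        refine Finset.sum_congr rfl fun j hj => ?_
        rw [hTB j (by simpa [Nat.lt_succ_iff] using hj), Finset.mul_sum]
        refine Finset.sum_congr rfl fun i _ => ?_
        rw [← map_qChoose (q^p) (Polynomial.C : S →+* Polynomial S) a j]
        simp only [map_mul, map_pow, map_one, map_neg, Polynomial.C_1]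
        ring
    _ = ∑ i ∈ Finset.range (p*a+1),
          Polynomial.C (∑ j ∈ Finset.range (a+1),
            (-1:S)^(a-j) * (q^p)^((a-j)*((a-j)-1)/2) * qChoose (q^p) a j *
            (x^p)^(a-j) * (qChoose q (p*j) i * x^(p*j-i))) *
            twp (Polynomial.C q) (Polynomial.C x) (Polynomial.X + Polynomial.C x) i := by
        rw [Finset.sum_comm]
        refine Finset.sum_congr rfl fun i _ => ?_
        rw [← Finset.sum_mul, map_sum]
    _ = ∑ i ∈ Finset.range (p*a+1),
          Polynomial.C (Polynomial.eval₂ (Int.castRingHom S) q (frobCoeff p a i) * x^(p*a-i)) *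
            twp (Polynomial.C q) (Polynomial.C x) (Polynomial.X + Polynomial.C x) i := by
        refine Finset.sum_congr rfl fun i hi => ?_
        rw [Finset.mem_range] at hi
        have hkey : (∑ j ∈ Finset.range (a+1),
            (-1:S)^(a-j) * (q^p)^((a-j)*((a-j)-1)/2) * qChoose (q^p) a j *
            (x^p)^(a-j) * (qChoose q (p*j) i * x^(p*j-i)))
            = Polynomial.eval₂ (Int.castRingHom S) q (frobCoeff p a i) * x^(p*a-i) := by
          rw [frobCoeff, Polynomial.eval₂_finset_sum, Finset.sum_mul]
          refine Finset.sum_congr rfl fun j hj => ?_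
          rw [Finset.mem_range, Nat.lt_succ_iff] at hj
          simp only [Polynomial.eval₂_mul, Polynomial.eval₂_pow, Polynomial.eval₂_neg,
            Polynomial.eval₂_one, Polynomial.eval₂_X, eval₂_qChoose]
          rcases le_or_gt i (p*j) with h | h
          · have hx : (x^p)^(a-j) * x^(p*j-i) = x^(p*a-i) := by
              rw [← pow_mul, ← pow_add]
              congr 1
              have := Nat.mul_le_mul_left p hj
              rcases Nat.exists_eq_add_of_le hj with ⟨e, rfl⟩
              have h2 : p * (j + e) = p*j + p*e := by ring
              have h4 : p * (j + e - j) = p * e := by congr 1; omega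
              omega
            rw [← hx, ← pow_mul]
            ring
          · rw [qChoose_eq_zero_of_lt q h]
            ring
        rw [hkey]

end Model

section Phi
open Polynomial
variable {K : Type*} [Field K]

lemma phi_twp (q x : K) (p a : ℕ) :
    Polynomial.aeval (wFrob q x p)
        (twp (Polynomial.C (q^p)) (Polynomial.C (s0 q x p))
          (Polynomial.X + Polynomial.C (s0 q x p)) a)
    = Polynomial.C (((qInt q p)⁻¹)^a) *
      ∑ i ∈ Finset.range (p*a+1),
        Polynomial.C (Polynomial.eval₂ (Int.castRingHom K) q (frobCoeff p a i) * x^(p*a-i)) *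
          twp (Polynomial.C q) (Polynomial.C x) (Polynomial.X + Polynomial.C x) i := by
  have h1 : Polynomial.aeval (wFrob q x p)
        (twp (Polynomial.C (q^p)) (Polynomial.C (s0 q x p))
          (Polynomial.X + Polynomial.C (s0 q x p)) a)
      = twp (Polynomial.C (q^p)) (Polynomial.C (s0 q x p))
          (wFrob q x p + Polynomial.C (s0 q x p)) a := by
    have hmap := map_twp (Polynomial.aeval (wFrob q x p)).toRingHom
      (Polynomial.C (q^p)) (Polynomial.C (s0 q x p))
      (Polynomial.X + Polynomial.C (s0 q x p)) a
    simpa [Polynomial.aeval_C, Polynomial.algebraMap_eq] using hmap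
  have h2 : wFrob q x p + Polynomial.C (s0 q x p)
      = Polynomial.C ((qInt q p)⁻¹) * (Polynomial.X + Polynomial.C x)^p := by
    rw [wFrob, s0, Polynomial.C_mul]
    ring
  have h3 : twp (Polynomial.C (q^p)) (Polynomial.C (s0 q x p))
        (Polynomial.C ((qInt q p)⁻¹) * (Polynomial.X + Polynomial.C x)^p) a
      = Polynomial.C (((qInt q p)⁻¹)^a) *
          twp (Polynomial.C (q^p)) (Polynomial.C (x^p)) ((Polynomial.X + Polynomial.C x)^p) a := by
    rw [twp, twp]
    calc ∏ j ∈ Finset.range a,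
          (Polynomial.C ((qInt q p)⁻¹) * (Polynomial.X + Polynomial.C x)^p
            - (Polynomial.C (q^p))^j * Polynomial.C (s0 q x p))
        = ∏ j ∈ Finset.range a,
            (Polynomial.C ((qInt q p)⁻¹) *
              ((Polynomial.X + Polynomial.C x)^p - (Polynomial.C (q^p))^j * Polynomial.C (x^p))) := by
          refine Finset.prod_congr rfl fun j _ => ?_
          rw [s0, Polynomial.C_mul]
          ring
      _ = (Polynomial.C ((qInt q p)⁻¹))^a *
            ∏ j ∈ Finset.range a,
              ((Polynomial.X + Polynomial.C x)^p - (Polynomial.C (q^p))^j * Polynomial.C (x^p)) := by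
          rw [Finset.prod_mul_distrib, Finset.prod_const, Finset.card_range]
      _ = Polynomial.C (((qInt q p)⁻¹)^a) *
            ∏ j ∈ Finset.range a,
              ((Polynomial.X + Polynomial.C x)^p - (Polynomial.C (q^p))^j * Polynomial.C (x^p)) := by
          rw [← Polynomial.C_pow]
  rw [h1, h2, h3, gauss_tb]

end Phi

section UnivField
open Polynomial

lemma qInt_one_base (k : ℕ) : qInt (1 : ℤ) k = k := by simp [qInt]

lemma qFact_one_base : ∀ k : ℕ, qFact (1:ℤ) k = k.factorial
  | 0 => rfl
  | k+1 => by
      rw [qFact_succ, qFact_one_base k, qInt_one_base]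
      push_cast [Nat.factorial_succ]
      ring

lemma qFact_poly_ne (r : Polynomial ℤ) (hr : Polynomial.eval 1 r = 1) (k : ℕ) :
    qFact r k ≠ 0 := by
  intro h
  have h2 := congrArg (Polynomial.evalRingHom (1:ℤ)) h
  rw [map_qFact r (Polynomial.evalRingHom (1:ℤ)) k, map_zero] at h2
  rw [Polynomial.coe_evalRingHom] at h2
  rw [hr, qFact_one_base] at h2
  exact_mod_cast Nat.factorial_ne_zero k (by exact_mod_cast h2)

lemma qInt_poly_ne (r : Polynomial ℤ) (hr : Polynomial.eval 1 r = 1) (p : ℕ) (hp : 1 ≤ p) :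
    qInt r p ≠ 0 := by
  intro h
  have h2 := congrArg (Polynomial.evalRingHom (1:ℤ)) h
  rw [map_qInt r (Polynomial.evalRingHom (1:ℤ)) p, map_zero] at h2
  rw [Polynomial.coe_evalRingHom, hr, qInt_one_base] at h2
  omega

abbrev K0 : Type := FractionRing UR

noncomputable def q0 : K0 := algebraMap UR K0 tA
noncomputable def x0 : K0 := algebraMap UR K0 Polynomial.X

/-- the canonical map `ℤ[t] → K₀` -/
noncomputable def i0 : Polynomial ℤ →+* K0 :=
  (algebraMap UR K0).comp (Polynomial.C : Polynomial ℤ →+* UR)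

lemma i0_injective : Function.Injective i0 :=
  (IsFractionRing.injective UR K0).comp (Polynomial.C_injective)

lemma i0_ne {f : Polynomial ℤ} (hf : f ≠ 0) : i0 f ≠ 0 := by
  intro h
  exact hf (i0_injective (by rw [h, map_zero]))


lemma psiA_eq_algebraMap : (psiA q0 x0 : UR →+* K0) = algebraMap UR K0 := by
  apply Polynomial.ringHom_ext'
  · apply Polynomial.ringHom_ext'
    · exact RingHom.ext_int _ _
    · show psiA q0 x0 (Polynomial.C Polynomial.X) = algebraMap UR K0 (Polynomial.C Polynomial.X)
      rw [show (Polynomial.C Polynomial.X : UR) = tA from rfl, psiA_tA]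
      rfl
  · show psiA q0 x0 Polynomial.X = algebraMap UR K0 Polynomial.X
    rw [psiA_X]
    rfl

lemma qFact_q0_ne (k : ℕ) : qFact q0 k ≠ 0 := by
  have h : qFact q0 k = i0 (qFact Polynomial.X k) := by
    rw [map_qFact Polynomial.X i0 k]
    congr 1
  rw [h]
  exact i0_ne (qFact_poly_ne _ (by simp) k)

lemma qFact_q0p_ne (p k : ℕ) : qFact (q0^p) k ≠ 0 := by
  have h : qFact (q0^p) k = i0 (qFact (Polynomial.X^p) k) := by
    rw [map_qFact (Polynomial.X^p) i0 k, map_pow]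
    congr 2
  rw [h]
  exact i0_ne (qFact_poly_ne _ (by simp) k)

lemma qInt_q0_ne (p : ℕ) (hp : 1 ≤ p) : qInt q0 p ≠ 0 := by
  have h : qInt q0 p = i0 (qInt Polynomial.X p) := by
    rw [map_qInt Polynomial.X i0 p]
    congr 1
  rw [h]
  exact i0_ne (qInt_poly_ne _ (by simp) p hp)

lemma psiA_C_q0 (f : Polynomial ℤ) : psiA q0 x0 (Polynomial.C f) = i0 f := by
  rw [psiA_eq_algebraMap]
  rfl

lemma x0_ne : x0 ≠ 0 := by
  intro h
  apply Polynomial.X_ne_zero (R := Polynomial ℤ)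
  exact IsFractionRing.injective UR K0 (h.trans (map_zero _).symm)

end UnivField

section Vanish
open Polynomial

/-- `aeval q0` with the generic int-algebra instance pinned -/
noncomputable def eps0 (f : Polynomial ℤ) : K0 :=
  Polynomial.eval₂ (Int.castRingHom K0) q0 f

lemma frobCoeff_eq_zero_of_lt (p a i : ℕ) (hp : 1 ≤ p) (hia : i < a) :
    frobCoeff p a i = 0 := by
  have key : i0 (frobCoeff p a i) = 0 → frobCoeff p a i = 0 := fun h =>
    i0_injective (by rw [h, map_zero])
  apply key
  set T : ℕ → Polynomial K0 := fun k =>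
    twp (Polynomial.C q0) (Polynomial.C x0) (Polynomial.X + Polynomial.C x0) k with hTdef
  have hmon : ∀ k, (T k).Monic := fun k => (twp_basis_monic q0 x0 k).1
  have hdeg : ∀ k, (T k).natDegree = k := fun k => (twp_basis_monic q0 x0 k).2
  have h1 : twp (Polynomial.C (q0^p)) (Polynomial.C (x0^p))
      ((Polynomial.X + Polynomial.C x0)^p) a
      = ∑ k ∈ Finset.range (p*a+1),
          Polynomial.C (eps0 (frobCoeff p a k) * x0^(p*a-k)) * T k :=
    gauss_tb q0 x0 p a
  have hdvd : T a ∣ twp (Polynomial.C (q0^p)) (Polynomial.C (x0^p))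
      ((Polynomial.X + Polynomial.C x0)^p) a := by
    rw [hTdef]
    simp only [twp]
    apply Finset.prod_dvd_prod_of_dvd
    intro j _
    have h2 : ((Polynomial.X + Polynomial.C x0) - (Polynomial.C q0)^j * Polynomial.C x0)
        ∣ ((Polynomial.X + Polynomial.C x0)^p - ((Polynomial.C q0)^j * Polynomial.C x0)^p) :=
      sub_dvd_pow_sub_pow _ _ p
    have h3 : ((Polynomial.C q0)^j * Polynomial.C x0)^p
        = (Polynomial.C (q0^p))^j * Polynomial.C (x0^p) := by
      simp only [← Polynomial.C_pow, ← Polynomial.C_mul]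
      congr 1
      ring
    rwa [h3] at h2
  have ha1 : a ≤ p*a+1 := by
    have := Nat.le_mul_of_pos_left a (show 0 < p from hp)
    omega
  have hsplit : (∑ k ∈ Finset.range (p*a+1),
        Polynomial.C (eps0 (frobCoeff p a k) * x0^(p*a-k)) * T k)
      = (∑ k ∈ Finset.range a,
          Polynomial.C (eps0 (frobCoeff p a k) * x0^(p*a-k)) * T k)
        + ∑ k ∈ Finset.Ico a (p*a+1),
            Polynomial.C (eps0 (frobCoeff p a k) * x0^(p*a-k)) * T k := by
    rw [Finset.range_eq_Ico, ← Finset.sum_Ico_consecutive _ (Nat.zero_le a) ha1,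
      ← Finset.range_eq_Ico]
  have hH : T a ∣ ∑ k ∈ Finset.Ico a (p*a+1),
      Polynomial.C (eps0 (frobCoeff p a k) * x0^(p*a-k)) * T k := by
    apply Finset.dvd_sum
    intro k hk
    rw [Finset.mem_Ico] at hk
    have hTk : T k = T a * ∏ j ∈ Finset.range (k-a),
        ((Polynomial.X + Polynomial.C x0) - (Polynomial.C q0)^(a+j) * Polynomial.C x0) := by
      rw [hTdef]
      simp only []
      rw [show k = a + (k-a) from by omega, twp_add]
      rw [show a + (k-a) - a = k - a from by omega]
    rw [hTk]
    exact ⟨Polynomial.C (eps0 (frobCoeff p a k) * x0^(p*a-k)) *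
      ∏ j ∈ Finset.range (k-a),
        ((Polynomial.X + Polynomial.C x0) - (Polynomial.C q0)^(a+j) * Polynomial.C x0), by ring⟩
  have hG : T a ∣ ∑ k ∈ Finset.range (p*a+1),
      Polynomial.C (eps0 (frobCoeff p a k) * x0^(p*a-k)) * T k := by
    rw [← h1]
    exact hdvd
  have hL : T a ∣ ∑ k ∈ Finset.range a,
      Polynomial.C (eps0 (frobCoeff p a k) * x0^(p*a-k)) * T k := by
    have hLeq : (∑ k ∈ Finset.range a,
        Polynomial.C (eps0 (frobCoeff p a k) * x0^(p*a-k)) * T k)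
        = (∑ k ∈ Finset.range (p*a+1),
            Polynomial.C (eps0 (frobCoeff p a k) * x0^(p*a-k)) * T k)
          - ∑ k ∈ Finset.Ico a (p*a+1),
              Polynomial.C (eps0 (frobCoeff p a k) * x0^(p*a-k)) * T k := by
      rw [hsplit]; ring
    rw [hLeq]
    exact dvd_sub hG hH
  have hL0 : (∑ k ∈ Finset.range a,
      Polynomial.C (eps0 (frobCoeff p a k) * x0^(p*a-k)) * T k) = 0 := by
    by_contra hne
    obtain ⟨g, hg⟩ := hL
    have hgne : g ≠ 0 := by
      rintro rfl
      rw [mul_zero] at hg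
      exact hne hg
    have hdegL : (∑ k ∈ Finset.range a,
        Polynomial.C (eps0 (frobCoeff p a k) * x0^(p*a-k)) * T k).natDegree < a := by
      have hb := Polynomial.natDegree_sum_le_of_forall_le (Finset.range a)
        (fun k => Polynomial.C (eps0 (frobCoeff p a k) * x0^(p*a-k)) * T k)
        (n := a - 1) ?_
      · have hb2 : (∑ k ∈ Finset.range a,
            Polynomial.C (eps0 (frobCoeff p a k) * x0^(p*a-k)) * T k).natDegree
            ≤ a - 1 := hb
        omega
      · intro k hk
        rw [Finset.mem_range] at hk
        show (Polynomial.C (eps0 (frobCoeff p a k) * x0^(p*a-k)) * T k).natDegree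
            ≤ a - 1
        have h4 := Polynomial.natDegree_C_mul_le
          (eps0 (frobCoeff p a k) * x0^(p*a-k)) (T k)
        have h5 := hdeg k
        omega
    have hge : a ≤ (∑ k ∈ Finset.range a,
        Polynomial.C (eps0 (frobCoeff p a k) * x0^(p*a-k)) * T k).natDegree := by
      rw [hg, Polynomial.natDegree_mul (hmon a).ne_zero hgne, hdeg a]
      omega
    omega
  have hv := sum_monic_eq_zero T hmon hdeg a
    (fun k => eps0 (frobCoeff p a k) * x0^(p*a-k)) hL0 i hia
  have hv' : eps0 (frobCoeff p a i) * x0^(p*a-i) = 0 := hv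
  have hi0 : i0 (frobCoeff p a i) * x0^(p*a-i) = 0 := by
    rw [← psiA_C_q0, psiA_C]
    exact hv'
  rcases mul_eq_zero.1 hi0 with h | h
  · exact h
  · exact absurd h (pow_ne_zero _ x0_ne)

end Vanish

section BcFacts
open Polynomial

lemma frobCoeff_eq_zero_of_gt (p n i : ℕ) (h : p*n < i) : frobCoeff p n i = 0 := by
  rw [frobCoeff]
  apply Finset.sum_eq_zero
  intro j hj
  rw [Finset.mem_range, Nat.lt_succ_iff] at hj
  rw [qChoose_eq_zero_of_lt Polynomial.X
    (show p*j < i from by have := Nat.mul_le_mul_left p hj; omega), mul_zero]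

variable (p : ℕ) (hp : 1 ≤ p) (Bc : ℕ → ℕ → Polynomial ℤ)
  (hBc : ∀ n i : ℕ,
    qFact (Polynomial.X : Polynomial ℤ) i * frobCoeff p n i =
      qFact ((Polynomial.X : Polynomial ℤ) ^ p) n *
        (qInt (Polynomial.X : Polynomial ℤ) p) ^ n * Bc n i)

include hp hBc

lemma Bc_aux (n i : ℕ) (h : frobCoeff p n i = 0) : Bc n i = 0 := by
  have h1 := hBc n i
  rw [h, mul_zero] at h1
  have h2 : qFact ((Polynomial.X : Polynomial ℤ)^p) n *
      (qInt (Polynomial.X : Polynomial ℤ) p)^n ≠ 0 :=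
    mul_ne_zero (qFact_poly_ne _ (by simp) n) (pow_ne_zero _ (qInt_poly_ne _ (by simp) p hp))
  rcases mul_eq_zero.1 h1.symm with h | h
  · exact absurd h h2
  · exact h

lemma Bc_eq_zero_of_lt (n i : ℕ) (h : i < n) : Bc n i = 0 :=
  Bc_aux p hp Bc hBc n i (frobCoeff_eq_zero_of_lt p n i hp h)

lemma Bc_eq_zero_of_gt (n i : ℕ) (h : p*n < i) : Bc n i = 0 :=
  Bc_aux p hp Bc hBc n i (frobCoeff_eq_zero_of_gt p n i h)

omit hp in
lemma Bc_zero_zero : Bc 0 0 = 1 := by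
  have h1 := hBc 0 0
  simp [frobCoeff] at h1
  exact h1.symm

end BcFacts

section ModelC
open Polynomial
set_option synthInstance.maxHeartbeats 1000000

lemma s0_y (p : ℕ) (hp : 1 ≤ p) : (1 - q0^p) * s0 q0 x0 p = (1-q0) * x0^p := by
  have h := one_sub_mul_qInt q0 p
  rw [s0]
  have hne := qInt_q0_ne p hp
  field_simp
  linear_combination (-x0^p) * h

lemma cB_mul (p : ℕ) (hp : 1 ≤ p) (m n : ℕ) :
    bB (q0^p) (s0 q0 x0 p) m * bB (q0^p) (s0 q0 x0 p) n
    = ∑ i ∈ Finset.range (min m n + 1),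
        dpCoeff (q0^p) ((1-q0) * x0^p) m n i • bB (q0^p) (s0 q0 x0 p) (m+n-i) := by
  rw [bB_mul (q0^p) (s0 q0 x0 p) (qFact_q0p_ne p) m n]
  refine Finset.sum_congr rfl fun i _ => ?_
  rw [← s0_y p hp]

/-- the divided Frobenius on the model: image of `ω^{[a]}` -/
lemma phi_cB (p : ℕ) (hp : 1 ≤ p) (Bc : ℕ → ℕ → Polynomial ℤ)
    (hBc : ∀ n i : ℕ,
      qFact (Polynomial.X : Polynomial ℤ) i * frobCoeff p n i =
        qFact ((Polynomial.X : Polynomial ℤ) ^ p) n *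
          (qInt (Polynomial.X : Polynomial ℤ) p) ^ n * Bc n i) (a : ℕ) :
    Polynomial.aeval (wFrob q0 x0 p) (bB (q0^p) (s0 q0 x0 p) a)
    = ∑ k ∈ Finset.Icc a (p*a), psiA q0 x0 (ucf p Bc a k) • bB q0 x0 k := by
  have heps : ∀ f : Polynomial ℤ, psiA q0 x0 (Polynomial.C f) = i0 f := psiA_C_q0
  have hBcK : ∀ b i : ℕ, qFact q0 i * i0 (frobCoeff p b i)
      = qFact (q0^p) b * (qInt q0 p)^b * i0 (Bc b i) := by
    intro b i
    have h1 := congrArg i0 (hBc b i)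
    rw [map_mul, map_mul, map_mul, map_pow, map_qFact _ i0, map_qFact _ i0, map_qInt _ i0,
      map_pow] at h1
    have hX : i0 Polynomial.X = q0 := by rw [← psiA_C_q0, ← tA, psiA_tA]
    rw [hX] at h1
    exact h1
  have hkey : ∀ i : ℕ, (qFact (q0^p) a)⁻¹ * (((qInt q0 p)⁻¹)^a * i0 (frobCoeff p a i))
      = i0 (Bc a i) * (qFact q0 i)⁻¹ := by
    intro i
    have h1 := hBcK a i
    have h2 : qFact (q0^p) a ≠ 0 := qFact_q0p_ne p a
    have h3 : qInt q0 p ≠ 0 := qInt_q0_ne p hp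
    have h4 : qFact q0 i ≠ 0 := qFact_q0_ne i
    have hI : qInt q0 p ^ a * (qInt q0 p)⁻¹ ^ a = 1 := by
      rw [← mul_pow, mul_inv_cancel₀ h3, one_pow]
    field_simp
    linear_combination (qInt q0 p)⁻¹ ^ a * h1 + qFact (q0^p) a * i0 (Bc a i) * hI
  rw [bB, map_mul, phi_twp q0 x0 p a]
  have haC : (Polynomial.aeval (wFrob q0 x0 p)) (Polynomial.C ((qFact (q0^p) a)⁻¹))
      = Polynomial.C ((qFact (q0^p) a)⁻¹) := by
    rw [Polynomial.aeval_C, Polynomial.algebraMap_eq]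
  rw [haC, Finset.mul_sum, Finset.mul_sum]
  have hstep : ∀ i ∈ Finset.range (p*a+1),
      Polynomial.C ((qFact (q0^p) a)⁻¹) *
        (Polynomial.C (((qInt q0 p)⁻¹)^a) *
          (Polynomial.C (Polynomial.eval₂ (Int.castRingHom K0) q0 (frobCoeff p a i) * x0^(p*a-i)) *
            twp (Polynomial.C q0) (Polynomial.C x0) (Polynomial.X + Polynomial.C x0) i))
      = Polynomial.C (i0 (Bc a i) * x0^(p*a-i) * (qFact q0 i)⁻¹) *
          twp (Polynomial.C q0) (Polynomial.C x0) (Polynomial.X + Polynomial.C x0) i := by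
    intro i _
    rw [← psiA_C q0 x0, psiA_C_q0, ← mul_assoc, ← mul_assoc, ← Polynomial.C_mul,
      ← Polynomial.C_mul]
    congr 2
    linear_combination x0^(p*a-i) * hkey i
  rw [Finset.sum_congr rfl hstep]
  have hicc : ∀ k ∈ Finset.Icc a (p*a), psiA q0 x0 (ucf p Bc a k) • bB q0 x0 k
      = Polynomial.C (i0 (Bc a k) * x0^(p*a-k) * (qFact q0 k)⁻¹) *
          twp (Polynomial.C q0) (Polynomial.C x0) (Polynomial.X + Polynomial.C x0) k := by
    intro k hk
    rw [Finset.mem_Icc] at hk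
    rw [ucf, if_pos (And.intro hk.1 hk.2), map_mul, psiA_C_q0, map_pow, psiA_X, bB,
      Polynomial.smul_eq_C_mul, ← mul_assoc, ← Polynomial.C_mul]
  rw [Finset.sum_congr rfl hicc]
  refine (Finset.sum_subset ?_ ?_).symm
  · intro k hk
    rw [Finset.mem_Icc] at hk
    rw [Finset.mem_range]
    omega
  · intro k hk hnk
    rw [Finset.mem_range] at hk
    rw [Finset.mem_Icc] at hnk
    have hklt : k < a := by omega
    rw [Bc_eq_zero_of_lt p hp Bc hBc a k hklt]
    simp

end ModelC

section UKey
open Polynomial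
set_option synthInstance.maxHeartbeats 1000000

lemma uLHS_eq_uRHS (p : ℕ) (hp : 1 ≤ p) (Bc : ℕ → ℕ → Polynomial ℤ)
    (hBc : ∀ n i : ℕ,
      qFact (Polynomial.X : Polynomial ℤ) i * frobCoeff p n i =
        qFact ((Polynomial.X : Polynomial ℤ) ^ p) n *
          (qInt (Polynomial.X : Polynomial ℤ) p) ^ n * Bc n i)
    (m n k : ℕ) (hk : k < p*(m+n)+1) :
    uLHS p Bc m n k = uRHS p Bc m n k := by
  have hφ : ∀ a, (fun a => Polynomial.aeval (wFrob q0 x0 p) (bB (q0^p) (s0 q0 x0 p) a)) a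
      = ∑ kk ∈ Finset.Icc a (p*a), psiA q0 x0 (ucf p Bc a kk) • bB q0 x0 kk :=
    fun a => phi_cB p hp Bc hBc a
  have hG1 := G1 q0 x0 p Bc (bB q0 x0)
    (fun a => Polynomial.aeval (wFrob q0 x0 p) (bB (q0^p) (s0 q0 x0 p) a)) hφ m n
  have hG2 := G2 q0 x0 p Bc (bB q0 x0) (bB_mul q0 x0 qFact_q0_ne) m n
  have hmid : (∑ i ∈ Finset.range (min m n + 1), dpCoeff (q0^p) ((1-q0)*x0^p) m n i •
        Polynomial.aeval (wFrob q0 x0 p) (bB (q0^p) (s0 q0 x0 p) (m+n-i)))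
      = (∑ i ∈ Finset.Icc m (p*m), psiA q0 x0 (ucf p Bc m i) • bB q0 x0 i) *
        (∑ j ∈ Finset.Icc n (p*n), psiA q0 x0 (ucf p Bc n j) • bB q0 x0 j) := by
    rw [← hφ m, ← hφ n]
    show _ = Polynomial.aeval (wFrob q0 x0 p) (bB (q0^p) (s0 q0 x0 p) m) *
        Polynomial.aeval (wFrob q0 x0 p) (bB (q0^p) (s0 q0 x0 p) n)
    rw [← map_mul, cB_mul p hp m n, map_sum]
    refine Finset.sum_congr rfl fun i _ => ?_
    rw [map_smul]
  have hfinal : (∑ kk ∈ Finset.range (p*(m+n)+1), psiA q0 x0 (uLHS p Bc m n kk) • bB q0 x0 kk)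
      = ∑ kk ∈ Finset.range (p*(m+n)+1), psiA q0 x0 (uRHS p Bc m n kk) • bB q0 x0 kk := by
    rw [← hG1, hmid, hG2]
  have h0 : ∀ kk : ℕ,
      Polynomial.C ((psiA q0 x0 (uLHS p Bc m n kk) - psiA q0 x0 (uRHS p Bc m n kk)) *
          (qFact q0 kk)⁻¹) *
        twp (Polynomial.C q0) (Polynomial.C x0) (Polynomial.X + Polynomial.C x0) kk
      = psiA q0 x0 (uLHS p Bc m n kk) • bB q0 x0 kk
        - psiA q0 x0 (uRHS p Bc m n kk) • bB q0 x0 kk := by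
    intro kk
    rw [bB, Polynomial.smul_eq_C_mul, Polynomial.smul_eq_C_mul, Polynomial.C_mul,
      Polynomial.C_sub]
    ring
  have hzero : (∑ kk ∈ Finset.range (p*(m+n)+1),
      Polynomial.C ((psiA q0 x0 (uLHS p Bc m n kk) - psiA q0 x0 (uRHS p Bc m n kk)) *
          (qFact q0 kk)⁻¹) *
        twp (Polynomial.C q0) (Polynomial.C x0) (Polynomial.X + Polynomial.C x0) kk) = 0 := by
    rw [Finset.sum_congr rfl (fun kk _ => h0 kk), Finset.sum_sub_distrib, hfinal, sub_self]
  have hv := sum_monic_eq_zero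
    (fun kk => twp (Polynomial.C q0) (Polynomial.C x0) (Polynomial.X + Polynomial.C x0) kk)
    (fun kk => (twp_basis_monic q0 x0 kk).1) (fun kk => (twp_basis_monic q0 x0 kk).2)
    (p*(m+n)+1)
    (fun kk => (psiA q0 x0 (uLHS p Bc m n kk) - psiA q0 x0 (uRHS p Bc m n kk)) *
      (qFact q0 kk)⁻¹) hzero k hk
  have hv' : (psiA q0 x0 (uLHS p Bc m n k) - psiA q0 x0 (uRHS p Bc m n k)) *
      (qFact q0 k)⁻¹ = 0 := hv
  have heq : psiA q0 x0 (uLHS p Bc m n k) = psiA q0 x0 (uRHS p Bc m n k) := by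
    rcases mul_eq_zero.1 hv' with h | h
    · exact sub_eq_zero.1 h
    · exact absurd h (inv_ne_zero (qFact_q0_ne k))
  have hinj : Function.Injective (psiA q0 x0 : UR →+* K0) := by
    rw [psiA_eq_algebraMap]
    exact IsFractionRing.injective UR K0
  exact hinj heq

end UKey

/-- Let `y := (1−q)x`, let `C = A⟨ω⟩_{q^p,(1−q)x^p}` (basis `c`) and `B = A⟨ξ⟩_{q,y}`
(basis `b`) be twisted divided power polynomial rings, and let `Bc n i` be the divided
`p`-Frobenius coefficients, i.e. `(i)_t! A_{n,i} = (n)_{t^p}! (p)_t^n Bc n i`. Then the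
`A`-linear map `ω^{[n]} ↦ Σ_{i=n}^{pn} B_{n,i}(q) x^{pn−i} ξ^{[i]}` is a homomorphism of
rings (a morphism of `A`-algebras), the divided `p`-Frobenius map. -/
theorem statement19 {R A B C : Type*} [CommRing R] [CommRing A] [Algebra R A]
    [CommRing B] [Algebra A B] [CommRing C] [Algebra A C]
    (q : R) (x : A) (p : ℕ) (hp : 1 ≤ p)
    (Bc : ℕ → ℕ → Polynomial ℤ)
    (hBc : ∀ n i : ℕ,
      qFact (Polynomial.X : Polynomial ℤ) i * frobCoeff p n i =
        qFact ((Polynomial.X : Polynomial ℤ) ^ p) n *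
          (qInt (Polynomial.X : Polynomial ℤ) p) ^ n * Bc n i)
    (b : Module.Basis ℕ A B)
    (hb : ∀ m n : ℕ, b m * b n = ∑ i ∈ Finset.range (min m n + 1),
      dpCoeff (algebraMap R A q) ((1 - algebraMap R A q) * x) m n i • b (m + n - i))
    (c : Module.Basis ℕ A C)
    (hc : ∀ m n : ℕ, c m * c n = ∑ i ∈ Finset.range (min m n + 1),
      dpCoeff ((algebraMap R A q) ^ p) ((1 - algebraMap R A q) * x ^ p) m n i • c (m + n - i)) :
    ∃ u : C →ₐ[A] B,
      ∀ n : ℕ, u (c n) = ∑ i ∈ Finset.Icc n (p * n),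
        (Polynomial.aeval (algebraMap R A q) (Bc n i) * x ^ (p * n - i)) • b i := by
  set Q : A := algebraMap R A q with hQ
  -- b 0 = 1 and c 0 = 1
  have hbone : b 0 = 1 := by
    have h1 : ∀ nn, b 0 * b nn = b nn := by
      intro nn
      rw [hb 0 nn]
      simp [dpCoeff]
    have h2 : LinearMap.mulLeft A (b 0) = LinearMap.id := by
      apply Module.Basis.ext b
      intro nn
      simpa using h1 nn
    have h3 := LinearMap.ext_iff.1 h2 1
    simpa using h3
  have hcone : c 0 = 1 := by
    have h1 : ∀ nn, c 0 * c nn = c nn := by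
      intro nn
      rw [hc 0 nn]
      simp [dpCoeff]
    have h2 : LinearMap.mulLeft A (c 0) = LinearMap.id := by
      apply Module.Basis.ext c
      intro nn
      simpa using h1 nn
    have h3 := LinearMap.ext_iff.1 h2 1
    simpa using h3
  -- the linear map
  set f : ℕ → B := fun nn => ∑ i ∈ Finset.Icc nn (p*nn),
    (Polynomial.aeval Q (Bc nn i) * x^(p*nn-i)) • b i with hf
  set u0 : C →ₗ[A] B := Module.Basis.constr c A f with hu0def
  have hu0 : ∀ nn, u0 (c nn) = f nn := fun nn => Module.Basis.constr_basis c A f nn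
  have hcoef : ∀ a k : ℕ, k ∈ Finset.Icc a (p*a) →
      (Polynomial.aeval Q (Bc a k) * x^(p*a-k)) = psiA Q x (ucf p Bc a k) := by
    intro a k hk
    rw [Finset.mem_Icc] at hk
    rw [ucf, if_pos (And.intro hk.1 hk.2), map_mul, psiA_C, map_pow, psiA_X]
    congr 1
  have hu0' : ∀ a, u0 (c a) = ∑ k ∈ Finset.Icc a (p*a), psiA Q x (ucf p Bc a k) • b k := by
    intro a
    rw [hu0 a]
    exact Finset.sum_congr rfl fun k hk => by rw [hcoef a k hk]
  -- multiplicativity on the basis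
  have key : ∀ m n : ℕ, u0 (c m * c n) = u0 (c m) * u0 (c n) := by
    intro m n
    have h1 : u0 (c m * c n) = ∑ i ∈ Finset.range (min m n + 1),
        dpCoeff (Q^p) ((1-Q)*x^p) m n i • u0 (c (m+n-i)) := by
      rw [hc m n, map_sum]
      exact Finset.sum_congr rfl fun i _ => by rw [map_smul]
    have hG1 := G1 Q x p Bc b (fun a => u0 (c a)) hu0' m n
    have hG2 := G2 Q x p Bc b hb m n
    calc u0 (c m * c n)
        = ∑ i ∈ Finset.range (min m n + 1),
            dpCoeff (Q^p) ((1-Q)*x^p) m n i • u0 (c (m+n-i)) := h1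
      _ = ∑ k ∈ Finset.range (p*(m+n)+1), psiA Q x (uLHS p Bc m n k) • b k := hG1
      _ = ∑ k ∈ Finset.range (p*(m+n)+1), psiA Q x (uRHS p Bc m n k) • b k :=
          Finset.sum_congr rfl fun k hk => by
            rw [uLHS_eq_uRHS p hp Bc hBc m n k (Finset.mem_range.1 hk)]
      _ = (∑ i ∈ Finset.Icc m (p*m), psiA Q x (ucf p Bc m i) • b i) *
          (∑ j ∈ Finset.Icc n (p*n), psiA Q x (ucf p Bc n j) • b j) := hG2.symm
      _ = u0 (c m) * u0 (c n) := by rw [← hu0' m, ← hu0' n]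
  -- u0 1 = 1
  have hone : u0 1 = 1 := by
    rw [← hcone, hu0 0]
    have hBc00 : Bc 0 0 = 1 := Bc_zero_zero p Bc hBc
    have : f 0 = b 0 := by
      rw [hf]
      simp [hBc00]
    rw [this, hbone]
  -- full multiplicativity
  have hmul : ∀ z w : C, u0 (z * w) = u0 z * u0 w := by
    have step1 : ∀ (m : ℕ) (w : C), u0 (c m * w) = u0 (c m) * u0 w := by
      intro m
      have hL : (u0 ∘ₗ LinearMap.mulLeft A (c m)) = (LinearMap.mulLeft A (u0 (c m))) ∘ₗ u0 := by
        apply Module.Basis.ext c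
        intro n
        simpa using key m n
      intro w
      simpa using LinearMap.ext_iff.1 hL w
    intro z w
    have hL : (u0 ∘ₗ LinearMap.mulRight A w) = (LinearMap.mulRight A (u0 w)) ∘ₗ u0 := by
      apply Module.Basis.ext c
      intro m
      simpa using step1 m w
    simpa using LinearMap.ext_iff.1 hL z
  refine ⟨AlgHom.ofLinearMap u0 hone hmul, fun n => ?_⟩
  show u0 (c n) = _
  rw [hu0 n]
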